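/- For every n ≥ 2 and all k, ℓ ∈ ℕ, the identity (k, 0, …, 0, ℓ) = Σ_{(a_1,…,a_n) ∈ 𝓔_n(k+ℓ)} (−1)^{a_1+⋯+a_{n−1}+(n−1)(r−1)} · (∏_{i=1}^{n−1} A(k − x_i, r − a_i)) · (a_1, …, a_n) holds in V_n, where x_i = a_1 + a_2 + ⋯ + a_{i−1} (so x_1 = 0), and (k,0,…,0,ℓ) denotes the basis tuple with first entry k, last entry ℓ, and all other entries 0. -/

import Mathlib

noncomputable section

open Finset

/-- The field `ℚ(q)` of rational functions. -/
abbrev K : Type := RatFunc ℚ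

/-- The variable `q`. -/
def q : K := RatFunc.X

/-- The balanced `q`-integer `[n] = (q^n - q^{-n})/(q - q^{-1})`. -/
def qint (n : ℤ) : K := (q ^ n - q ^ (-n)) / (q - q⁻¹)

/-- The `q`-factorial `[m]! = [1][2]⋯[m]`. -/
def qfact (m : ℕ) : K := ∏ t ∈ Finset.range m, qint (t + 1)

/-- The `q`-binomial coefficient `[n ¦ m] = [n][n-1]⋯[n-m+1]/[m]!`. -/
def qbinom (n : ℤ) (m : ℕ) : K := (∏ t ∈ Finset.range m, qint (n - t)) / qfact m

/-- The tuple `a(i,j)` obtained from `a` by replacing the pair of entries at the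
(0-based) positions `i, i+1` by `(a_i − j, a_{i+1} + j)`. -/
def tupleRepl {n : ℕ} (a : Fin n → ℕ) (i : ℕ) (h : i + 1 < n) (j : ℕ) : Fin n → ℕ :=
  fun t =>
    if t = (⟨i, by omega⟩ : Fin n) then a ⟨i, by omega⟩ - j
    else if t = (⟨i + 1, h⟩ : Fin n) then a ⟨i + 1, h⟩ + j
    else a t

/-- The set of spanning elements of the subspace `R_n` of relations:
`Σ_{j=0}^{r} (−1)^j [r ¦ j] · a(i,j)` for `a ∈ ℕ^n` and a position `i` with `a_i ≥ r`. -/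
def relSet (r n : ℕ) : Set ((Fin n → ℕ) →₀ K) :=
  { x | ∃ (a : Fin n → ℕ) (i : ℕ) (h : i + 1 < n), r ≤ a ⟨i, by omega⟩ ∧
      x = ∑ j ∈ Finset.range (r + 1),
            ((-1 : K) ^ j * qbinom (r : ℤ) j) • Finsupp.single (tupleRepl a i h j) (1 : K) }

/-- The coefficient `A(k,s) = [s+k−r−1 ¦ s−1] · [k ¦ r−s]`. -/
def Acoef (r : ℕ) (k : ℤ) (s : ℕ) : K := qbinom ((s : ℤ) + k - (r : ℤ) - 1) (s - 1) * qbinom k (r - s)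

/-- Entry access for a tuple, with out-of-range positions reading `0`. -/
def aget {n : ℕ} (a : Fin n → ℕ) (t : ℕ) : ℕ := if h : t < n then a ⟨t, h⟩ else 0

/-- The basis tuple `(k, 0, …, 0, ℓ)` with first entry `k`, last entry `ℓ`,
and all other entries `0`. -/
def endTuple (n k l : ℕ) : Fin n → ℕ :=
  fun t => if t.val = 0 then k else if t.val = n - 1 then l else 0

/-- The finite set `𝓔_n(m)` of tuples with entry sum `m` and all entries except
possibly the last one lying in `[0, r−1]`. -/
def ESet (r n m : ℕ) : Finset (Fin n → ℕ) :=
  (Fintype.piFinset fun _ : Fin n => Finset.range (m + 1)).filter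
    (fun a => (∑ t, a t) = m ∧ ∀ t : Fin n, t.val < n - 1 → a t ≤ r - 1)

lemma q_ne_zero : q ≠ 0 := RatFunc.X_ne_zero

lemma q_pow_ne_one (m : ℕ) (hm : m ≠ 0) : q ^ m ≠ 1 := by
  intro h
  have : (Polynomial.X : Polynomial ℚ) ^ m = 1 := by
    apply IsFractionRing.injective (Polynomial ℚ) K
    rw [map_pow, map_one]
    simpa [q, RatFunc.algebraMap_X] using h
  have := congrArg Polynomial.natDegree this
  simp [Polynomial.natDegree_X_pow] at this
  exact hm this

lemma q_zpow_ne_one (m : ℤ) (hm : m ≠ 0) : q ^ m ≠ 1 := by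
  intro h
  rcases lt_trichotomy m 0 with hlt | h0 | hgt
  · have h2 : q ^ (-m) = 1 := by
      rw [zpow_neg, h, inv_one]
    have := q_pow_ne_one (-m).toNat (by omega)
    rw [← zpow_natCast, Int.toNat_of_nonneg (by omega)] at this
    exact this h2
  · exact hm h0
  · have := q_pow_ne_one m.toNat (by omega)
    rw [← zpow_natCast, Int.toNat_of_nonneg (by omega)] at this
    exact this h

lemma qden_ne_zero : q - q⁻¹ ≠ 0 := by
  intro h
  have h1 : q * q = 1 := by
    have := sub_eq_zero.mp h
    field_simp [q_ne_zero] at this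
    linear_combination this
  have := q_pow_ne_one 2 (by norm_num)
  rw [pow_two] at this
  exact this h1

lemma qint_ne_zero (n : ℤ) (hn : n ≠ 0) : qint n ≠ 0 := by
  unfold qint
  apply div_ne_zero _ qden_ne_zero
  intro h
  have h1 : q ^ (2 * n) = 1 := by
    have h2 : q ^ n = q ^ (-n) := sub_eq_zero.mp h
    have : q ^ (2 * n) = q ^ n * q ^ n := by
      rw [two_mul, zpow_add₀ q_ne_zero]
    rw [this]
    nth_rewrite 1 [h2]
    rw [← zpow_add₀ q_ne_zero, neg_add_cancel, zpow_zero]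
  exact q_zpow_ne_one (2 * n) (by omega) h1

lemma qint_zero : qint 0 = 0 := by unfold qint; norm_num

lemma qint_neg (n : ℤ) : qint (-n) = - qint n := by
  unfold qint
  rw [neg_neg, ← neg_div, neg_sub]

lemma qfact_ne_zero (m : ℕ) : qfact m ≠ 0 := by
  unfold qfact
  apply Finset.prod_ne_zero_iff.mpr
  intro t _
  exact qint_ne_zero _ (by omega)

lemma qbinom_zero (n : ℤ) : qbinom n 0 = 1 := by simp [qbinom, qfact]

lemma qbinom_nat_self (m : ℕ) : qbinom (m : ℤ) m = 1 := by
  unfold qbinom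
  rw [div_eq_one_iff_eq (qfact_ne_zero m)]
  unfold qfact
  rw [← Finset.prod_range_reflect]
  apply Finset.prod_congr rfl
  intro t ht
  simp only [Finset.mem_range] at ht
  congr 1
  omega

lemma qbinom_nat_zero_of_lt (N m : ℕ) (h : N < m) : qbinom (N : ℤ) m = 0 := by
  unfold qbinom
  rw [Finset.prod_eq_zero (Finset.mem_range.mpr h) (by simp [qint_zero] : qint ((N:ℤ) - N) = 0)]
  simp

lemma qbinom_neg_one (m : ℕ) : qbinom (-1) m = (-1) ^ m := by
  unfold qbinom
  have h : ∏ t ∈ Finset.range m, qint (-1 - t) = (-1)^m * qfact m := by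
    unfold qfact
    have : ∀ t ∈ Finset.range m, qint (-1 - (t:ℤ)) = (-1) * qint ((t:ℤ) + 1) := by
      intro t _
      rw [neg_one_mul, ← qint_neg]
      congr 1
      ring
    rw [Finset.prod_congr rfl this, Finset.prod_mul_distrib, Finset.prod_const,
      Finset.card_range]
  rw [h, mul_div_assoc, div_self (qfact_ne_zero m), mul_one]

lemma qint_split (n m : ℤ) : qint n = q ^ (m - n) * qint m + q ^ m * qint (n - m) := by
  unfold qint
  rw [← mul_div_assoc, ← mul_div_assoc, ← add_div]
  congr 1
  have hq := q_ne_zero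
  rw [zpow_sub₀ hq, zpow_sub₀ hq, zpow_neg, zpow_neg, zpow_neg, zpow_sub₀ hq]
  have hn : q ^ n ≠ 0 := zpow_ne_zero _ hq
  have hm : q ^ m ≠ 0 := zpow_ne_zero _ hq
  field_simp
  ring

lemma qbinom_succ (n : ℤ) (m : ℕ) :
    qbinom n (m + 1) =
      q ^ ((m : ℤ) + 1 - n) * qbinom (n - 1) m + q ^ ((m : ℤ) + 1) * qbinom (n - 1) (m + 1) := by
  unfold qbinom
  have e1 : ∏ t ∈ Finset.range (m + 1), qint (n - t) =
      qint n * ∏ t ∈ Finset.range m, qint (n - 1 - t) := by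
    rw [Finset.prod_range_succ']
    simp only [Nat.cast_add, Nat.cast_one, Nat.cast_zero, sub_zero]
    rw [mul_comm]
    congr 1
    apply Finset.prod_congr rfl
    intro t _
    congr 1
    ring
  have e2 : ∏ t ∈ Finset.range (m + 1), qint (n - 1 - t) =
      (∏ t ∈ Finset.range m, qint (n - 1 - t)) * qint (n - 1 - m) := by
    rw [Finset.prod_range_succ]
  have e3 : qfact (m + 1) = qfact m * qint ((m : ℤ) + 1) := by
    rw [qfact, Finset.prod_range_succ, ← qfact]
  rw [e1, e2, e3]
  have hF : qfact m ≠ 0 := qfact_ne_zero m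
  have hG : qint ((m : ℤ) + 1) ≠ 0 := qint_ne_zero _ (by omega)
  have key : qint n = q ^ ((m : ℤ) + 1 - n) * qint ((m:ℤ) + 1) + q ^ ((m : ℤ) + 1) * qint (n - ((m:ℤ) + 1)) :=
    qint_split n ((m : ℤ) + 1)
  have e4 : n - 1 - (m:ℤ) = n - ((m:ℤ)+1) := by ring
  rw [e4]
  have e5 : (∏ t ∈ Finset.range m, qint (n - 1 - (t:ℤ))) / qfact m =
      (∏ t ∈ Finset.range m, qint (n - 1 - (t:ℤ))) * qint ((m:ℤ)+1) / (qfact m * qint ((m:ℤ)+1)) := by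
    rw [mul_div_mul_right _ _ hG]
  rw [e5, ← mul_div_assoc, ← mul_div_assoc, ← add_div]
  congr 1
  linear_combination (∏ t ∈ Finset.range m, qint (n - 1 - (t:ℤ))) * key

lemma gauss : ∀ (r : ℕ) (z : K), ∑ j ∈ Finset.range (r+1), (-1:K)^j * qbinom (r:ℤ) j * z^j
    = ∏ t ∈ Finset.range r, (1 - q^((r:ℤ)-1-2*(t:ℤ)) * z) := by
  intro r
  induction r with
  | zero => intro z; simp [qbinom_zero]
  | succ r ih =>
    intro z
    have key : ∑ j ∈ Finset.range (r+2), (-1:K)^j * qbinom ((r:ℤ)+1) j * z^j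
        = (1 - q^(-(r:ℤ)) * z) * ∑ j ∈ Finset.range (r+1), (-1:K)^j * qbinom (r:ℤ) j * (q*z)^j := by
      rw [Finset.sum_range_succ']
      have hA : ∀ j ∈ Finset.range (r+1),
          (-1:K)^(j+1) * qbinom ((r:ℤ)+1) (j+1) * z^(j+1)
          = (-(q^(-(r:ℤ)) * z)) * ((-1:K)^j * qbinom (r:ℤ) j * (q*z)^j)
            + (-1:K)^(j+1) * qbinom (r:ℤ) (j+1) * (q*z)^(j+1) := by
        intro j _
        rw [qbinom_succ ((r:ℤ)+1) j]
        have e : (r:ℤ)+1-1 = (r:ℤ) := by ring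
        rw [e]
        have e2 : ((j:ℤ)+1-((r:ℤ)+1)) = -(r:ℤ) + (j:ℤ) := by ring
        rw [e2, zpow_add₀ q_ne_zero, zpow_natCast]
        have e3 : q ^ ((j:ℤ)+1) = q ^ (j+1) := by
          rw [← zpow_natCast q (j+1)]
          push_cast
          ring_nf
        rw [e3, mul_pow, mul_pow]
        ring
      rw [Finset.sum_congr rfl hA, Finset.sum_add_distrib, ← Finset.mul_sum]
      have hB : ∑ j ∈ Finset.range (r+1), (-1:K)^(j+1) * qbinom (r:ℤ) (j+1) * (q*z)^(j+1)
          = (∑ j ∈ Finset.range (r+1), (-1:K)^j * qbinom (r:ℤ) j * (q*z)^j) - 1 := by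
        have e2 := Finset.sum_range_succ' (fun j => (-1:K)^j * qbinom (r:ℤ) j * (q*z)^j) (r+1)
        rw [Finset.sum_range_succ _ (r+1), qbinom_nat_zero_of_lt r (r+1) (by omega)] at e2
        simp only [qbinom_zero, pow_zero, mul_zero, zero_mul, mul_one, add_zero] at e2
        linear_combination -e2
      rw [hB]
      simp only [qbinom_zero, pow_zero, mul_one, one_mul]
      ring
    have cast1 : ((r+1 : ℕ) : ℤ) = (r:ℤ)+1 := by push_cast; ring
    rw [show r+1+1 = r+2 from rfl, cast1, key, ih (q*z), Finset.prod_range_succ]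
    have e4 : ∀ t ∈ Finset.range r, (1 - q^((r:ℤ)-1-2*(t:ℤ)) * (q*z)) = (1 - q^((r:ℤ)+1-1-2*(t:ℤ)) * z) := by
      intro t _
      have : (r:ℤ)+1-1-2*(t:ℤ) = ((r:ℤ)-1-2*(t:ℤ)) + 1 := by ring
      rw [this, zpow_add_one₀ q_ne_zero]
      ring
    rw [Finset.prod_congr rfl e4]
    have e5 : (r:ℤ)+1-1-2*(r:ℤ) = -(r:ℤ) := by ring
    rw [e5]
    ring

lemma gauss_eval_zero (r s : ℕ) (hr : 1 ≤ r) (hs : s ≤ r - 1) :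
    ∑ j ∈ Finset.range (r+1), (-1:K)^j * qbinom (r:ℤ) j * (q^((r:ℤ)-1-2*(s:ℤ)))^j = 0 := by
  rw [gauss r (q^((r:ℤ)-1-2*(s:ℤ)))]
  apply Finset.prod_eq_zero (i := r-1-s) (Finset.mem_range.mpr (by omega))
  rw [← zpow_add₀ q_ne_zero]
  have e : ((r:ℤ)-1-2*((r-1-s:ℕ):ℤ)) + ((r:ℤ)-1-2*(s:ℤ)) = 0 := by
    have : ((r-1-s:ℕ):ℤ) = (r:ℤ)-1-(s:ℤ) := by omega
    rw [this]; ring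
  rw [e, zpow_zero, sub_self]

lemma keyL (r : ℕ) (hr : 1 ≤ r) (c : ℕ → ℤ) (k : ℤ) :
    ∑ j ∈ Finset.range (r+1), (-1:K)^j * qbinom (r:ℤ) j * ∏ i ∈ Finset.range (r-1), qint (k - (j:ℤ) + c i) = 0 := by
  have hq := q_ne_zero
  set v : K := (q - q⁻¹)⁻¹ with hv
  have expand : ∀ j ∈ Finset.range (r+1), ∏ i ∈ Finset.range (r-1), qint (k - (j:ℤ) + c i)
      = ∑ S ∈ (Finset.range (r-1)).powerset,
          ((v^(r-1) * ∏ i ∈ S, q^(k + c i)) * ∏ i ∈ (Finset.range (r-1)) \ S, (-(q^(-(k + c i)))))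
            * (q^((r:ℤ)-1-2*(S.card:ℤ)))^j := by
    intro j _
    have e1 : ∀ i ∈ Finset.range (r-1), qint (k - (j:ℤ) + c i)
        = ((q^(k + c i) * q^(-(j:ℤ)) + (-(q^(-(k + c i)))) * q^((j:ℤ))) * v) := by
      intro i _
      rw [hv, qint, div_eq_mul_inv]
      congr 1
      have h1 : -(k + c i) + (j:ℤ) = -(k - (j:ℤ) + c i) := by ring
      have h2 : k + c i + -(j:ℤ) = k - (j:ℤ) + c i := by ring
      rw [neg_mul, ← zpow_add₀ hq, ← zpow_add₀ hq, h1, h2]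
      ring
    rw [Finset.prod_congr rfl e1, Finset.prod_mul_distrib, Finset.prod_const, Finset.card_range,
      Finset.prod_add, Finset.sum_mul]
    apply Finset.sum_congr rfl
    intro S hS
    simp only [Finset.mem_powerset] at hS
    have hcard : S.card ≤ r - 1 := by
      have := Finset.card_le_card hS
      rwa [Finset.card_range] at this
    rw [Finset.prod_mul_distrib, Finset.prod_const, Finset.prod_mul_distrib, Finset.prod_const,
      Finset.card_sdiff_of_subset hS, Finset.card_range]
    have epow : (q^(-(j:ℤ)))^(S.card) * (q^((j:ℤ)))^(r-1-S.card) = (q^((r:ℤ)-1-2*(S.card:ℤ)))^j := by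
      rw [← zpow_natCast (q^(-(j:ℤ))) S.card, ← zpow_natCast (q^((j:ℤ))) (r-1-S.card),
        ← zpow_mul, ← zpow_mul, ← zpow_add₀ hq, ← zpow_natCast (q^((r:ℤ)-1-2*(S.card:ℤ))) j, ← zpow_mul]
      congr 1
      have h1 : ((r-1-S.card : ℕ) : ℤ) = (r:ℤ) - 1 - (S.card:ℤ) := by omega
      rw [h1]
      ring
    rw [← epow]
    ring
  rw [Finset.sum_congr rfl (fun j hj => by rw [expand j hj])]
  have swap : ∑ j ∈ Finset.range (r+1), (-1:K)^j * qbinom (r:ℤ) j *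
      ∑ S ∈ (Finset.range (r-1)).powerset,
          ((v^(r-1) * ∏ i ∈ S, q^(k + c i)) * ∏ i ∈ (Finset.range (r-1)) \ S, (-(q^(-(k + c i)))))
            * (q^((r:ℤ)-1-2*(S.card:ℤ)))^j
      = ∑ S ∈ (Finset.range (r-1)).powerset,
          ((v^(r-1) * ∏ i ∈ S, q^(k + c i)) * ∏ i ∈ (Finset.range (r-1)) \ S, (-(q^(-(k + c i)))))
            * ∑ j ∈ Finset.range (r+1), (-1:K)^j * qbinom (r:ℤ) j * (q^((r:ℤ)-1-2*(S.card:ℤ)))^j := by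
    simp only [Finset.mul_sum]
    rw [Finset.sum_comm]
    exact Finset.sum_congr rfl fun S _ => Finset.sum_congr rfl fun j _ => by ring
  rw [swap]
  apply Finset.sum_eq_zero
  intro S hS
  simp only [Finset.mem_powerset] at hS
  have hcard : S.card ≤ r - 1 := by
    have := Finset.card_le_card hS
    rwa [Finset.card_range] at this
  rw [gauss_eval_zero r S.card hr hcard, mul_zero]

lemma Acoef_diag (r M : ℕ) (hr : 1 ≤ r) (hM : M ≤ r - 1) : Acoef r (M:ℤ) (r - M) = (-1:K)^(r-M-1) := by
  unfold Acoef
  have h1 : ((r - M:ℕ):ℤ) + (M:ℤ) - (r:ℤ) - 1 = -1 := by omega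
  have h2 : r - (r - M) = M := by omega
  rw [h1, h2, qbinom_neg_one, qbinom_nat_self, mul_one]

lemma Acoef_zero_lt (r M b : ℕ) (hb : b ≤ r - 1) (h : M < b) : Acoef r (M:ℤ) (r-b) = 0 := by
  unfold Acoef
  rw [show r - (r - b) = b by omega, qbinom_nat_zero_of_lt M b h, mul_zero]

lemma Acoef_zero_gt (r M b : ℕ) (hb : b < M) (hM : M ≤ r - 1) : Acoef r (M:ℤ) (r-b) = 0 := by
  unfold Acoef
  have h1 : ((r-b : ℕ):ℤ) + (M:ℤ) - (r:ℤ) - 1 = ((M-b-1 : ℕ):ℤ) := by omega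
  rw [h1, qbinom_nat_zero_of_lt (M-b-1) (r-b-1) (by omega), zero_mul]

lemma A_recur (r s : ℕ) (hr : 1 ≤ r) (hs1 : 1 ≤ s) (hs2 : s ≤ r) (k : ℤ) :
    ∑ j ∈ Finset.range (r+1), (-1:K)^j * qbinom (r:ℤ) j * Acoef r (k - (j:ℤ)) s = 0 := by
  set c : ℕ → ℤ := fun i => if i < s-1 then (s:ℤ)-(r:ℤ)-1-(i:ℤ) else (s:ℤ)-1-(i:ℤ) with hc
  have split : ∀ j : ℕ, Acoef r (k - (j:ℤ)) s
      = (∏ i ∈ Finset.range (r-1), qint (k - (j:ℤ) + c i)) * ((qfact (s-1))⁻¹ * (qfact (r-s))⁻¹) := by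
    intro j
    have hrs : r - 1 = (s-1) + (r-s) := by omega
    rw [Acoef, qbinom, qbinom, hrs, Finset.prod_range_add]
    have e1 : ∀ t ∈ Finset.range (s-1), qint (k - (j:ℤ) + c t)
        = qint ((s:ℤ) + (k - (j:ℤ)) - (r:ℤ) - 1 - (t:ℤ)) := by
      intro t ht
      simp only [Finset.mem_range] at ht
      rw [hc]
      simp only [if_pos ht]
      congr 1
      ring
    have e2 : ∀ t ∈ Finset.range (r-s), qint (k - (j:ℤ) + c ((s-1) + t))
        = qint (k - (j:ℤ) - (t:ℤ)) := by
      intro t _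
      rw [hc]
      simp only [if_neg (by omega : ¬ ((s-1)+t < s-1))]
      congr 1
      have : ((s-1+t : ℕ):ℤ) = (s:ℤ) - 1 + (t:ℤ) := by omega
      rw [this]
      ring
    rw [Finset.prod_congr rfl e1, Finset.prod_congr rfl e2]
    have f1 := qfact_ne_zero (s-1)
    have f2 := qfact_ne_zero (r-s)
    field_simp
  have e3 : ∑ j ∈ Finset.range (r+1), (-1:K)^j * qbinom (r:ℤ) j * Acoef r (k - (j:ℤ)) s
      = (∑ j ∈ Finset.range (r+1), (-1:K)^j * qbinom (r:ℤ) j *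
          ∏ i ∈ Finset.range (r-1), qint (k - (j:ℤ) + c i)) * ((qfact (s-1))⁻¹ * (qfact (r-s))⁻¹) := by
    rw [Finset.sum_mul]
    exact Finset.sum_congr rfl fun j _ => by rw [split j]; ring
  rw [e3, keyL r hr c k, zero_mul]

def setPair {n : ℕ} (a : Fin n → ℕ) (i : ℕ) (h : i + 1 < n) (x y : ℕ) : Fin n → ℕ :=
  fun t =>
    if t = (⟨i, by omega⟩ : Fin n) then x
    else if t = (⟨i + 1, h⟩ : Fin n) then y
    else a t

lemma fin_ne {n i : ℕ} (h : i + 1 < n) :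
    (⟨i + 1, h⟩ : Fin n) ≠ (⟨i, by omega⟩ : Fin n) := by
  simp [Fin.ext_iff]

lemma setPair_fst {n : ℕ} (a : Fin n → ℕ) (i : ℕ) (h : i + 1 < n) (x y : ℕ) :
    setPair a i h x y ⟨i, by omega⟩ = x := by simp [setPair]

lemma setPair_snd {n : ℕ} (a : Fin n → ℕ) (i : ℕ) (h : i + 1 < n) (x y : ℕ) :
    setPair a i h x y ⟨i + 1, h⟩ = y := by simp [setPair, fin_ne h]

lemma setPair_setPair {n : ℕ} (a : Fin n → ℕ) (i : ℕ) (h : i + 1 < n) (x y x' y' : ℕ) :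
    setPair (setPair a i h x y) i h x' y' = setPair a i h x' y' := by
  funext t
  unfold setPair
  split_ifs <;> rfl

lemma tupleRepl_setPair {n : ℕ} (a : Fin n → ℕ) (i : ℕ) (h : i + 1 < n) (M L j : ℕ) :
    tupleRepl (setPair a i h M L) i h j = setPair a i h (M - j) (L + j) := by
  funext t
  unfold tupleRepl
  by_cases h1 : t = (⟨i, by omega⟩ : Fin n)
  · simp [h1, setPair_fst, setPair]
  · by_cases h2 : t = (⟨i + 1, h⟩ : Fin n)
    · simp [h1, h2, setPair, fin_ne h]
    · simp [h1, h2, setPair]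

lemma relMem' (r n : ℕ) (a : Fin n → ℕ) (i : ℕ) (h : i + 1 < n) (M L : ℕ) (hM : r ≤ M) :
    ∑ j ∈ Finset.range (r + 1),
        ((-1 : K) ^ j * qbinom (r : ℤ) j) • Finsupp.single (setPair a i h (M - j) (L + j)) (1 : K)
      ∈ Submodule.span K (relSet r n) := by
  apply Submodule.subset_span
  refine ⟨setPair a i h M L, i, h, ?_, ?_⟩
  · rw [setPair_fst]; exact hM
  · apply Finset.sum_congr rfl
    intro j _
    rw [tupleRepl_setPair]

lemma coeff_step (r : ℕ) (hr : 1 ≤ r) (M b : ℕ) (hM : r ≤ M) (hb : b < r) :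
    ((-1:K)^(b+(r-1)) * Acoef r (M:ℤ) (r-b))
      = ∑ j ∈ Finset.range r, ((-1:K)^j * qbinom (r:ℤ) (j+1)) *
          ((-1:K)^(b+(r-1)) * Acoef r (((M-(j+1) : ℕ)):ℤ) (r-b)) := by
  have h0 := A_recur r (r-b) hr (by omega) (by omega) (M:ℤ)
  rw [Finset.sum_range_succ'] at h0
  simp only [pow_zero, qbinom_zero, one_mul, Nat.cast_zero, sub_zero, Nat.cast_add,
    Nat.cast_one] at h0
  have ecast : ∀ j ∈ Finset.range r,
      (-1:K)^(j+1) * qbinom (r:ℤ) (j+1) * Acoef r ((M:ℤ) - ((j:ℤ)+1)) (r-b)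
      = -( (-1:K)^j * qbinom (r:ℤ) (j+1) * Acoef r (((M-(j+1) : ℕ)):ℤ) (r-b)) := by
    intro j hj
    simp only [Finset.mem_range] at hj
    have : ((M-(j+1) : ℕ) : ℤ) = (M:ℤ) - ((j:ℤ)+1) := by omega
    rw [this, pow_succ]
    ring
  rw [Finset.sum_congr rfl ecast, Finset.sum_neg_distrib] at h0
  have h1 : Acoef r (M:ℤ) (r-b)
      = ∑ j ∈ Finset.range r, (-1:K)^j * qbinom (r:ℤ) (j+1) * Acoef r (((M-(j+1) : ℕ)):ℤ) (r-b) := by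
    linear_combination h0
  rw [h1, Finset.mul_sum]
  exact Finset.sum_congr rfl fun j _ => by ring

lemma pair_lemma (r n : ℕ) (hr : 1 ≤ r) (i : ℕ) (h : i + 1 < n) :
    ∀ M L (a : Fin n → ℕ),
      Finsupp.single (setPair a i h M L) (1:K)
        - ∑ b ∈ Finset.range r, ((-1:K)^(b+(r-1)) * Acoef r (M:ℤ) (r-b)) •
            Finsupp.single (setPair a i h b (M+L-b)) (1:K)
      ∈ Submodule.span K (relSet r n) := by
  intro M
  induction M using Nat.strong_induction_on with
  | _ M IH =>
  intro L a
  by_cases hM : M < r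
  · have hsum : ∑ b ∈ Finset.range r, ((-1:K)^(b+(r-1)) * Acoef r (M:ℤ) (r-b)) •
        Finsupp.single (setPair a i h b (M+L-b)) (1:K)
        = Finsupp.single (setPair a i h M L) (1:K) := by
      rw [Finset.sum_eq_single_of_mem M (Finset.mem_range.mpr hM)]
      · rw [Acoef_diag r M hr (by omega)]
        have e1 : ((-1:K)^(M+(r-1)) * (-1:K)^(r-M-1)) = 1 := by
          rw [← pow_add, show (M+(r-1)) + (r-M-1) = 2*(r-1) by omega, pow_mul]
          norm_num
        rw [show M + L - M = L by omega, e1, one_smul]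
      · intro b hb hbne
        rcases lt_or_gt_of_ne hbne with hlt | hgt
        · rw [Acoef_zero_gt r M b hlt (by omega), mul_zero, zero_smul]
        · simp only [Finset.mem_range] at hb
          rw [Acoef_zero_lt r M b (by omega) hgt, mul_zero, zero_smul]
    rw [hsum, sub_self]
    exact Submodule.zero_mem _
  · push_neg at hM
    have hR := relMem' r n a i h M L hM
    have hD : ∀ j ∈ Finset.range r,
        Finsupp.single (setPair a i h (M-(j+1)) (L+(j+1))) (1:K)
          - ∑ b ∈ Finset.range r, ((-1:K)^(b+(r-1)) * Acoef r ((M-(j+1) : ℕ):ℤ) (r-b)) •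
              Finsupp.single (setPair a i h b ((M-(j+1))+(L+(j+1))-b)) (1:K)
        ∈ Submodule.span K (relSet r n) := by
      intro j hj
      exact IH (M-(j+1)) (by omega) (L+(j+1)) a
    have key : Finsupp.single (setPair a i h M L) (1:K)
        - ∑ b ∈ Finset.range r, ((-1:K)^(b+(r-1)) * Acoef r (M:ℤ) (r-b)) •
            Finsupp.single (setPair a i h b (M+L-b)) (1:K)
        = (∑ j ∈ Finset.range (r+1),
            ((-1:K)^j * qbinom (r:ℤ) j) • Finsupp.single (setPair a i h (M-j) (L+j)) (1:K))
          + ∑ j ∈ Finset.range r, ((-1:K)^j * qbinom (r:ℤ) (j+1)) •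
              (Finsupp.single (setPair a i h (M-(j+1)) (L+(j+1))) (1:K)
                - ∑ b ∈ Finset.range r, ((-1:K)^(b+(r-1)) * Acoef r ((M-(j+1) : ℕ):ℤ) (r-b)) •
                    Finsupp.single (setPair a i h b ((M-(j+1))+(L+(j+1))-b)) (1:K)) := by
      rw [Finset.sum_range_succ']
      simp only [pow_zero, qbinom_zero, one_mul, Nat.sub_zero, Nat.add_zero, one_smul]
      rw [add_right_comm, ← Finset.sum_add_distrib]
      have hrw : ∀ j ∈ Finset.range r,
          ((-1:K)^(j+1) * qbinom (r:ℤ) (j+1)) •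
              (Finsupp.single (setPair a i h (M-(j+1)) (L+(j+1))) (1:K))
            + ((-1:K)^j * qbinom (r:ℤ) (j+1)) •
              (Finsupp.single (setPair a i h (M-(j+1)) (L+(j+1))) (1:K)
                - ∑ b ∈ Finset.range r, ((-1:K)^(b+(r-1)) * Acoef r ((M-(j+1) : ℕ):ℤ) (r-b)) •
                    Finsupp.single (setPair a i h b ((M-(j+1))+(L+(j+1))-b)) (1:K))
          = -(((-1:K)^j * qbinom (r:ℤ) (j+1)) •
              ∑ b ∈ Finset.range r, ((-1:K)^(b+(r-1)) * Acoef r ((M-(j+1) : ℕ):ℤ) (r-b)) •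
                    Finsupp.single (setPair a i h b ((M-(j+1))+(L+(j+1))-b)) (1:K)) := by
        intro j _
        rw [smul_sub, show (-1:K)^(j+1) * qbinom (r:ℤ) (j+1)
            = -((-1:K)^j * qbinom (r:ℤ) (j+1)) by rw [pow_succ]; ring, neg_smul]
        abel
      rw [Finset.sum_congr rfl hrw, Finset.sum_neg_distrib, neg_add_eq_sub]
      congr 1
      have hH : ∀ j ∈ Finset.range r,
          ((-1:K)^j * qbinom (r:ℤ) (j+1)) •
              ∑ b ∈ Finset.range r, ((-1:K)^(b+(r-1)) * Acoef r ((M-(j+1) : ℕ):ℤ) (r-b)) •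
                    Finsupp.single (setPair a i h b ((M-(j+1))+(L+(j+1))-b)) (1:K)
          = ∑ b ∈ Finset.range r,
              (((-1:K)^j * qbinom (r:ℤ) (j+1)) * ((-1:K)^(b+(r-1)) * Acoef r ((M-(j+1) : ℕ):ℤ) (r-b))) •
                    Finsupp.single (setPair a i h b (M+L-b)) (1:K) := by
        intro j hj
        simp only [Finset.mem_range] at hj
        rw [Finset.smul_sum]
        apply Finset.sum_congr rfl
        intro b _
        rw [smul_smul, show M-(j+1)+(L+(j+1)) = M+L by omega]
      rw [Finset.sum_congr rfl hH, Finset.sum_comm]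
      apply Finset.sum_congr rfl
      intro b hb
      simp only [Finset.mem_range] at hb
      rw [← Finset.sum_smul, ← coeff_step r hr M b hM hb]
    rw [key]
    exact Submodule.add_mem _ hR
      (Submodule.sum_mem _ fun j hj => Submodule.smul_mem _ _ (hD j hj))

lemma van (r k : ℕ) {m : ℕ} (a : Fin m → ℕ) :
    ∀ p, (∀ t, t < p → aget a t ≤ r - 1) → k < ∑ u ∈ Finset.range p, aget a u →
    ∏ t ∈ Finset.range p,
      Acoef r ((k:ℤ) - (∑ u ∈ Finset.range t, (aget a u : ℤ))) (r - aget a t) = 0 := by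
  intro p
  induction p with
  | zero => intro _ hk; simp at hk
  | succ p ih =>
    intro hbd hk
    rw [Finset.prod_range_succ]
    by_cases hx : k < ∑ u ∈ Finset.range p, aget a u
    · rw [ih (fun t ht => hbd t (by omega)) hx, zero_mul]
    · push_neg at hx
      have hcross : k - (∑ u ∈ Finset.range p, aget a u) < aget a p := by
        rw [Finset.sum_range_succ] at hk; omega
      have hc : ((k:ℤ) - (∑ u ∈ Finset.range p, (aget a u : ℤ)))
          = ((k - ∑ u ∈ Finset.range p, aget a u : ℕ) : ℤ) := by
        have hcast : ((∑ u ∈ Finset.range p, aget a u : ℕ) : ℤ)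
            = ∑ u ∈ Finset.range p, (aget a u : ℤ) := by push_cast; ring
        omega
      rw [hc, Acoef_zero_lt r _ (aget a p) (hbd p (by omega)) hcross, mul_zero]

def Dset (r m p : ℕ) : Finset (Fin m → ℕ) :=
  Fintype.piFinset (fun i : Fin m => if (i:ℕ) < p then Finset.range r else {0})

def ccoef (r k p : ℕ) {m : ℕ} (a : Fin m → ℕ) : K :=
  (-1:K)^((∑ u ∈ Finset.range p, aget a u) + p*(r-1)) *
    ∏ t ∈ Finset.range p, Acoef r ((k:ℤ) - (∑ u ∈ Finset.range t, (aget a u : ℤ))) (r - aget a t)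

def Ttup (n k l p : ℕ) (a : Fin (n-1) → ℕ) : Fin n → ℕ :=
  fun t => if (t:ℕ) < p then aget a (t:ℕ)
    else if (t:ℕ) = p then (k - ∑ u ∈ Finset.range p, aget a u) + (if p = n-1 then l else 0)
    else if (t:ℕ) = n-1 then l else 0

lemma aget_update {m : ℕ} (a : Fin m → ℕ) (p : ℕ) (hp : p < m) (b t : ℕ) :
    aget (Function.update a ⟨p, hp⟩ b) t = if t = p then b else aget a t := by
  unfold aget
  by_cases ht : t < m
  · simp only [dif_pos ht, Function.update_apply]
    by_cases htp : t = p
    · simp [htp]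
    · have : (⟨t, ht⟩ : Fin m) ≠ ⟨p, hp⟩ := by simp [Fin.ext_iff]; omega
      simp [htp, this]
  · have : t ≠ p := by omega
    simp [dif_neg ht, this]

lemma mem_Dset {r m p : ℕ} {a : Fin m → ℕ} (ha : a ∈ Dset r m p) :
    (∀ i : Fin m, (i:ℕ) < p → a i < r) ∧ (∀ i : Fin m, ¬ (i:ℕ) < p → a i = 0) := by
  rw [Dset, Fintype.mem_piFinset] at ha
  constructor
  · intro i hi
    have := ha i
    rw [if_pos hi, Finset.mem_range] at this
    exact this
  · intro i hi
    have := ha i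
    rw [if_neg hi, Finset.mem_singleton] at this
    exact this

lemma aget_Dset_lt {r m p : ℕ} {a : Fin m → ℕ} (ha : a ∈ Dset r m p) (hr : 1 ≤ r)
    (t : ℕ) (ht : t < p) : aget a t ≤ r - 1 := by
  unfold aget
  split
  · have := (mem_Dset ha).1 ⟨t, by assumption⟩ ht
    omega
  · omega

lemma sum_aget_update {m : ℕ} (a : Fin m → ℕ) (p : ℕ) (hp : p < m) (b : ℕ) (t : ℕ) (ht : t ≤ p) :
    ∑ u ∈ Finset.range t, aget (Function.update a ⟨p, hp⟩ b) u
      = ∑ u ∈ Finset.range t, aget a u := by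
  apply Finset.sum_congr rfl
  intro u hu
  simp only [Finset.mem_range] at hu
  rw [aget_update, if_neg (by omega)]

lemma sum_aget_update_int {m : ℕ} (a : Fin m → ℕ) (p : ℕ) (hp : p < m) (b : ℕ) (t : ℕ) (ht : t ≤ p) :
    ∑ u ∈ Finset.range t, (aget (Function.update a ⟨p, hp⟩ b) u : ℤ)
      = ∑ u ∈ Finset.range t, (aget a u : ℤ) := by
  apply Finset.sum_congr rfl
  intro u hu
  simp only [Finset.mem_range] at hu
  rw [aget_update, if_neg (by omega)]

lemma ccoef_update {m : ℕ} (r k p : ℕ) (hp : p < m) (a : Fin m → ℕ) (b : ℕ) :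
    ccoef r k (p+1) (Function.update a ⟨p, hp⟩ b)
      = ccoef r k p a *
          ((-1:K)^(b+(r-1)) * Acoef r ((k:ℤ) - ∑ u ∈ Finset.range p, (aget a u : ℤ)) (r - b)) := by
  unfold ccoef
  rw [Finset.prod_range_succ, Finset.sum_range_succ, sum_aget_update a p hp b p le_rfl,
    aget_update, if_pos rfl, sum_aget_update_int a p hp b p le_rfl]
  have hprod : ∀ t ∈ Finset.range p,
      Acoef r ((k:ℤ) - ∑ u ∈ Finset.range t, (aget (Function.update a ⟨p, hp⟩ b) u : ℤ))
          (r - aget (Function.update a ⟨p, hp⟩ b) t)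
      = Acoef r ((k:ℤ) - ∑ u ∈ Finset.range t, (aget a u : ℤ)) (r - aget a t) := by
    intro t ht
    simp only [Finset.mem_range] at ht
    rw [sum_aget_update_int a p hp b t (by omega), aget_update, if_neg (by omega)]
  rw [Finset.prod_congr rfl hprod]
  rw [show (∑ u ∈ Finset.range p, aget a u + b) + (p+1)*(r-1)
      = ((∑ u ∈ Finset.range p, aget a u) + p*(r-1)) + (b + (r-1)) by ring, pow_add]
  ring

lemma setPair_Ttup (n k l p : ℕ) (hn : 2 ≤ n) (hp : p < n - 1) (a : Fin (n-1) → ℕ) :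
    setPair (Ttup n k l p a) p (by omega : p + 1 < n)
        (k - ∑ u ∈ Finset.range p, aget a u) (if p + 1 = n - 1 then l else 0)
      = Ttup n k l p a := by
  funext t
  by_cases hvp : (t:ℕ) = p
  · simp [setPair, Ttup, Fin.ext_iff, hvp, (show ¬ p = n-1 by omega), (show ¬ p < p by omega)]
  · by_cases hvp1 : (t:ℕ) = p+1
    · simp [setPair, Ttup, Fin.ext_iff, hvp1, (show ¬ p+1 < p by omega),
        (show ¬ p+1 = p by omega)]
    · simp [setPair, Ttup, Fin.ext_iff, hvp, hvp1]

lemma Ttup_update (n k l p : ℕ) (hn : 2 ≤ n) (hp : p < n - 1) (a : Fin (n-1) → ℕ) (b : ℕ)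
    (hxk : ∑ u ∈ Finset.range p, aget a u ≤ k) (hb : b ≤ k - ∑ u ∈ Finset.range p, aget a u) :
    Ttup n k l (p+1) (Function.update a ⟨p, by omega⟩ b)
      = setPair (Ttup n k l p a) p (by omega : p + 1 < n) b
          ((k - ∑ u ∈ Finset.range p, aget a u) + (if p + 1 = n - 1 then l else 0) - b) := by
  have hsum : ∑ u ∈ Finset.range (p+1), aget (Function.update a ⟨p, by omega⟩ b) u
      = (∑ u ∈ Finset.range p, aget a u) + b := by
    rw [Finset.sum_range_succ, sum_aget_update a p (by omega) b p le_rfl, aget_update, if_pos rfl]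
  funext t
  by_cases hvp : (t:ℕ) = p
  · simp [setPair, Ttup, Fin.ext_iff, hvp, (show p < p + 1 by omega), aget_update]
  · by_cases hvp1 : (t:ℕ) = p+1
    · have ht2 : t = (⟨p+1, by omega⟩ : Fin n) := Fin.ext hvp1
      have hne : t ≠ (⟨p, by omega⟩ : Fin n) := fun hh => hvp (by rw [hh])
      have hL : Ttup n k l (p+1) (Function.update a ⟨p, by omega⟩ b) t
          = (k - ((∑ u ∈ Finset.range p, aget a u) + b)) + (if p+1 = n-1 then l else 0) := by
        simp only [Ttup, if_neg (show ¬ (t:ℕ) < p+1 by omega), if_pos hvp1]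
        rw [hsum]
      have hR : setPair (Ttup n k l p a) p (by omega : p+1 < n) b
            ((k - ∑ u ∈ Finset.range p, aget a u) + (if p + 1 = n - 1 then l else 0) - b) t
          = (k - ∑ u ∈ Finset.range p, aget a u) + (if p + 1 = n - 1 then l else 0) - b := by
        simp only [setPair, if_neg hne, if_pos ht2]
      rw [hL, hR]
      by_cases hnl : p+1 = n-1
      · rw [if_pos hnl]
        omega
      · rw [if_neg hnl]
        omega
    · by_cases h3 : (t:ℕ) < p
      · simp [setPair, Ttup, Fin.ext_iff, hvp, hvp1, h3, (show (t:ℕ) < p+1 by omega),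
          aget_update]
      · simp [setPair, Ttup, Fin.ext_iff, hvp, hvp1, (show ¬ (t:ℕ) < p+1 by omega), h3]

lemma term_match (r n k l p : ℕ) (hr : 1 ≤ r) (hn : 2 ≤ n) (hp : p < n - 1)
    (a : Fin (n-1) → ℕ) (ha : a ∈ Dset r (n-1) p) (b : ℕ) (hb : b < r) :
    ccoef r k (p+1) (Function.update a ⟨p, by omega⟩ b) •
        Finsupp.single (Ttup n k l (p+1) (Function.update a ⟨p, by omega⟩ b)) (1:K)
      = (ccoef r k p a * ((-1:K)^(b+(r-1)) *
          Acoef r (((k - ∑ u ∈ Finset.range p, aget a u : ℕ)):ℤ) (r-b))) •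
        Finsupp.single (setPair (Ttup n k l p a) p (by omega : p+1 < n) b
          ((k - ∑ u ∈ Finset.range p, aget a u) + (if p + 1 = n - 1 then l else 0) - b)) (1:K) := by
  by_cases hxk : ∑ u ∈ Finset.range p, aget a u ≤ k
  · have hc0 : ((∑ u ∈ Finset.range p, aget a u : ℕ):ℤ) = ∑ u ∈ Finset.range p, (aget a u:ℤ) := by
      push_cast; ring
    have hcast : (((k - ∑ u ∈ Finset.range p, aget a u : ℕ)):ℤ)
        = (k:ℤ) - ∑ u ∈ Finset.range p, (aget a u : ℤ) := by omega
    by_cases hbM : b ≤ k - ∑ u ∈ Finset.range p, aget a u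
    · rw [hcast, ← ccoef_update r k p (by omega) a b, Ttup_update n k l p hn hp a b hxk hbM]
    · have hA : Acoef r ((k:ℤ) - ∑ u ∈ Finset.range p, (aget a u : ℤ)) (r-b) = 0 := by
        rw [← hcast]
        exact Acoef_zero_lt r _ b (by omega) (by omega)
      rw [hcast, ccoef_update r k p (by omega) a b, hA]
      simp
  · push_neg at hxk
    have h1 : ccoef r k p a = 0 := by
      unfold ccoef
      rw [van r k a p (fun t ht => aget_Dset_lt ha hr t ht) hxk, mul_zero]
    have h2 : ccoef r k (p+1) (Function.update a ⟨p, by omega⟩ b) = 0 := by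
      unfold ccoef
      rw [van r k _ (p+1) ?_ ?_, mul_zero]
      · intro t ht
        rw [aget_update]
        by_cases htp : t = p
        · rw [if_pos htp]; omega
        · rw [if_neg htp]
          exact aget_Dset_lt ha hr t (by omega)
      · rw [Finset.sum_range_succ, sum_aget_update a p (by omega) b p le_rfl, aget_update,
          if_pos rfl]
        omega
    rw [h1, h2]
    simp

lemma claimP (r n k l : ℕ) (hr : 1 ≤ r) (hn : 2 ≤ n) :
    ∀ p, p ≤ n - 1 →
    Finsupp.single (endTuple n k l) (1:K)
      - ∑ a ∈ Dset r (n-1) p, ccoef r k p a • Finsupp.single (Ttup n k l p a) (1:K)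
      ∈ Submodule.span K (relSet r n) := by
  intro p
  induction p with
  | zero =>
    intro _
    have h1 : ∀ a : Fin (n-1) → ℕ, Ttup n k l 0 a = endTuple n k l := by
      intro a
      funext t
      simp only [Ttup, endTuple]
      rw [if_neg (by omega : ¬ (t:ℕ) < 0)]
      by_cases h0 : (t:ℕ) = 0
      · rw [if_pos h0, if_pos h0, if_neg (by omega : ¬ (0:ℕ) = n-1)]
        simp
      · rw [if_neg h0, if_neg h0]
    have h2 : ∀ a : Fin (n-1) → ℕ, ccoef r k 0 a = 1 := by
      intro a; simp [ccoef]
    rw [Finset.sum_congr rfl (fun a _ => by rw [h1 a, h2 a, one_smul]), Finset.sum_const]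
    have hcard : (Dset r (n-1) 0).card = 1 := by
      rw [Dset, Fintype.card_piFinset]
      simp
    rw [hcard, one_nsmul, sub_self]
    exact Submodule.zero_mem _
  | succ p ih =>
    intro hp1
    have hp : p < n - 1 := by omega
    have hpn : p + 1 < n := by omega
    have hdouble :
        ∑ a' ∈ Dset r (n-1) (p+1), ccoef r k (p+1) a' • Finsupp.single (Ttup n k l (p+1) a') (1:K)
        = ∑ x ∈ (Dset r (n-1) p) ×ˢ Finset.range r,
            (ccoef r k p x.1 * ((-1:K)^(x.2+(r-1)) *
              Acoef r (((k - ∑ u ∈ Finset.range p, aget x.1 u : ℕ)):ℤ) (r-x.2))) •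
            Finsupp.single (setPair (Ttup n k l p x.1) p hpn x.2
              ((k - ∑ u ∈ Finset.range p, aget x.1 u) + (if p + 1 = n - 1 then l else 0) - x.2)) (1:K) := by
      have fvm : ((⟨p, hp⟩ : Fin (n-1)) : ℕ) = p := rfl
      have hne_val : ∀ {i : Fin (n-1)}, i ≠ (⟨p, hp⟩ : Fin (n-1)) → (i:ℕ) ≠ p :=
        fun hne hval => hne (Fin.ext (by rw [fvm]; exact hval))
      refine Finset.sum_bij' (fun a' _ => (Function.update a' (⟨p, hp⟩ : Fin (n-1)) 0, a' ⟨p, hp⟩))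
        (fun x _ => Function.update x.1 (⟨p, hp⟩ : Fin (n-1)) x.2) ?_ ?_ ?_ ?_ ?_
      · intro a' ha'
        have hm := (mem_Dset ha')
        simp only [Finset.mem_product]
        constructor
        · rw [Dset, Fintype.mem_piFinset]
          intro i
          rw [Function.update_apply]
          by_cases hip : i = ⟨p, hp⟩
          · rw [if_pos hip, if_neg (by rw [hip, fvm]; omega : ¬ (i:ℕ) < p)]
            exact Finset.mem_singleton_self 0
          · rw [if_neg hip]
            by_cases hilt : (i:ℕ) < p
            · rw [if_pos hilt]
              exact Finset.mem_range.mpr (hm.1 i (by omega))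
            · rw [if_neg hilt, hm.2 i (by have := hne_val hip; omega)]
              exact Finset.mem_singleton_self 0
        · exact Finset.mem_range.mpr (hm.1 ⟨p, hp⟩ (by rw [fvm]; omega))
      · intro x hx
        simp only [Finset.mem_product] at hx
        have hm := mem_Dset hx.1
        rw [Dset, Fintype.mem_piFinset]
        intro i
        rw [Function.update_apply]
        by_cases hip : i = ⟨p, hp⟩
        · rw [if_pos hip, if_pos (by rw [hip, fvm]; omega : (i:ℕ) < p + 1)]
          exact hx.2
        · rw [if_neg hip]
          by_cases hilt : (i:ℕ) < p
          · rw [if_pos (by omega : (i:ℕ) < p + 1)]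
            exact Finset.mem_range.mpr (hm.1 i hilt)
          · rw [if_neg (by have := hne_val hip; omega : ¬ (i:ℕ) < p + 1), hm.2 i hilt]
            exact Finset.mem_singleton_self 0
      · intro a' ha'
        dsimp only
        funext u
        rw [Function.update_apply, Function.update_apply]
        by_cases hup : u = ⟨p, hp⟩
        · rw [if_pos hup, hup]
        · rw [if_neg hup, if_neg hup]
      · intro x hx
        simp only [Finset.mem_product] at hx
        have hm := mem_Dset hx.1
        have hx0 : x.1 ⟨p, hp⟩ = 0 := hm.2 ⟨p, hp⟩ (by rw [fvm]; omega)
        have h1 : Function.update (Function.update x.1 (⟨p, hp⟩ : Fin (n-1)) x.2) ⟨p, hp⟩ 0 = x.1 := by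
          funext u
          rw [Function.update_apply, Function.update_apply]
          by_cases hup : u = ⟨p, hp⟩
          · rw [if_pos hup, hup, hx0]
          · rw [if_neg hup, if_neg hup]
        have h2 : Function.update x.1 (⟨p, hp⟩ : Fin (n-1)) x.2 ⟨p, hp⟩ = x.2 :=
          Function.update_self _ _ _
        rw [h1, h2]
      · intro a' ha'
        dsimp only
        have hm := mem_Dset ha'
        have hb : a' ⟨p, hp⟩ < r := hm.1 ⟨p, hp⟩ (by rw [fvm]; omega)
        have haa : Function.update (Function.update a' (⟨p, hp⟩ : Fin (n-1)) 0) ⟨p, hp⟩ (a' ⟨p, hp⟩) = a' := by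
          funext u
          rw [Function.update_apply, Function.update_apply]
          by_cases hup : u = ⟨p, hp⟩
          · rw [if_pos hup, hup]
          · rw [if_neg hup, if_neg hup]
        have hmem : Function.update a' (⟨p, hp⟩ : Fin (n-1)) 0 ∈ Dset r (n-1) p := by
          rw [Dset, Fintype.mem_piFinset]
          intro i
          rw [Function.update_apply]
          by_cases hip : i = ⟨p, hp⟩
          · rw [if_pos hip, if_neg (by rw [hip, fvm]; omega : ¬ (i:ℕ) < p)]
            exact Finset.mem_singleton_self 0
          · rw [if_neg hip]
            by_cases hilt : (i:ℕ) < p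
            · rw [if_pos hilt]
              exact Finset.mem_range.mpr (hm.1 i (by omega))
            · rw [if_neg hilt, hm.2 i (by have := hne_val hip; omega)]
              exact Finset.mem_singleton_self 0
        conv_lhs => rw [← haa]
        exact term_match r n k l p hr hn hp _ hmem _ hb
    have base := ih (by omega)
    suffices h2 : (∑ a ∈ Dset r (n-1) p, ccoef r k p a • Finsupp.single (Ttup n k l p a) (1:K))
        - ∑ a' ∈ Dset r (n-1) (p+1), ccoef r k (p+1) a' • Finsupp.single (Ttup n k l (p+1) a') (1:K)
        ∈ Submodule.span K (relSet r n) by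
      have hadd := Submodule.add_mem _ base h2
      rwa [sub_add_sub_cancel] at hadd
    rw [hdouble, Finset.sum_product, ← Finset.sum_sub_distrib]
    apply Submodule.sum_mem
    intro a ha
    have hpl := pair_lemma r n hr p hpn (k - ∑ u ∈ Finset.range p, aget a u)
      (if p + 1 = n - 1 then l else 0) (Ttup n k l p a)
    rw [setPair_Ttup n k l p hn hp a] at hpl
    have eq1 : ccoef r k p a • Finsupp.single (Ttup n k l p a) (1:K)
        - ∑ b ∈ Finset.range r,
            (ccoef r k p a * ((-1:K)^(b+(r-1)) *
              Acoef r (((k - ∑ u ∈ Finset.range p, aget a u : ℕ)):ℤ) (r-b))) •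
            Finsupp.single (setPair (Ttup n k l p a) p hpn b
              ((k - ∑ u ∈ Finset.range p, aget a u) + (if p + 1 = n - 1 then l else 0) - b)) (1:K)
        = ccoef r k p a • (Finsupp.single (Ttup n k l p a) (1:K)
            - ∑ b ∈ Finset.range r,
              ((-1:K)^(b+(r-1)) *
                Acoef r (((k - ∑ u ∈ Finset.range p, aget a u : ℕ)):ℤ) (r-b)) •
              Finsupp.single (setPair (Ttup n k l p a) p hpn b
                ((k - ∑ u ∈ Finset.range p, aget a u) + (if p + 1 = n - 1 then l else 0) - b)) (1:K)) := by
      rw [smul_sub, Finset.smul_sum]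
      congr 1
      exact Finset.sum_congr rfl fun b _ => (smul_smul _ _ _).symm
    rw [eq1]
    exact Submodule.smul_mem _ _ hpl

lemma aget_Ttup_lt (n k l p : ℕ) (a : Fin (n-1) → ℕ) (t : ℕ) (ht : t < p) (hp : p ≤ n-1)
    (hn : 2 ≤ n) : aget (Ttup n k l p a) t = aget a t := by
  have h1 : t < n := by omega
  have h2 : t < n - 1 := by omega
  conv_lhs => unfold aget
  rw [dif_pos h1]
  simp only [Ttup]
  rw [if_pos (show ((⟨t, h1⟩ : Fin n) : ℕ) < p from ht)]

lemma aget_eq_val {m : ℕ} (v : Fin m → ℕ) (t : ℕ) (ht : t < m) : aget v t = v ⟨t, ht⟩ := by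
  unfold aget
  rw [dif_pos ht]

lemma sum_fin_eq {m : ℕ} (v : Fin m → ℕ) : ∑ t, v t = ∑ i ∈ Finset.range m, aget v i := by
  rw [← Fin.sum_univ_eq_sum_range (fun i => aget v i) m]
  apply Finset.sum_congr rfl
  intro t _
  rw [aget_eq_val v t t.isLt]

lemma Ttup_last (n k l : ℕ) (hn : 2 ≤ n) (a : Fin (n-1) → ℕ) :
    Ttup n k l (n-1) a ⟨n-1, by omega⟩ = (k - ∑ u ∈ Finset.range (n-1), aget a u) + l := by
  simp only [Ttup]
  norm_num

lemma Ttup_last' (n k l : ℕ) (hn : 2 ≤ n) (a : Fin (n-1) → ℕ) (t : Fin n) (ht : (t:ℕ) = n-1) :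
    Ttup n k l (n-1) a t = (k - ∑ u ∈ Finset.range (n-1), aget a u) + l := by
  simp only [Ttup]
  rw [if_neg (by omega), if_pos ht]
  norm_num

lemma final_sum (r n k l : ℕ) (hr : 1 ≤ r) (hn : 2 ≤ n) :
    ∑ a ∈ Dset r (n-1) (n-1), ccoef r k (n-1) a • Finsupp.single (Ttup n k l (n-1) a) (1:K)
    = ∑ a ∈ ESet r n (k + l),
        ((-1 : K) ^ ((∑ t ∈ Finset.range (n - 1), aget a t) + (n - 1) * (r - 1)) *
          ∏ t ∈ Finset.range (n - 1),
            Acoef r ((k : ℤ) - (∑ u ∈ Finset.range t, (aget a u : ℤ))) (r - aget a t)) •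
        Finsupp.single a (1 : K) := by
  have hL : ∀ a ∈ Dset r (n-1) (n-1),
      (ccoef r k (n-1) a • Finsupp.single (Ttup n k l (n-1) a) (1:K)) ≠ 0 →
      (∑ u ∈ Finset.range (n-1), aget a u ≤ k) := by
    intro a ha hne
    by_contra hP
    apply hne
    have hc : ccoef r k (n-1) a = 0 := by
      unfold ccoef
      rw [van r k a (n-1) (fun t ht => aget_Dset_lt ha hr t ht) (by omega), mul_zero]
    rw [hc, zero_smul]
  have hR : ∀ v ∈ ESet r n (k+l),
      (((-1 : K) ^ ((∑ t ∈ Finset.range (n - 1), aget v t) + (n - 1) * (r - 1)) *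
          ∏ t ∈ Finset.range (n - 1),
            Acoef r ((k : ℤ) - (∑ u ∈ Finset.range t, (aget v u : ℤ))) (r - aget v t)) •
        Finsupp.single v (1 : K)) ≠ 0 →
      (∑ u ∈ Finset.range (n-1), aget v u ≤ k) := by
    intro v hv hne
    by_contra hP
    apply hne
    rw [ESet, Finset.mem_filter] at hv
    have hbd : ∀ t, t < n-1 → aget v t ≤ r - 1 := by
      intro t ht
      rw [aget_eq_val v t (by omega)]
      exact hv.2.2 ⟨t, by omega⟩ ht
    rw [van r k v (n-1) hbd (by omega), mul_zero, zero_smul]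
  rw [← Finset.sum_filter_of_ne hL, ← Finset.sum_filter_of_ne hR]
  refine Finset.sum_bij' (fun a _ => Ttup n k l (n-1) a)
    (fun v _ => fun i : Fin (n-1) => v ⟨(i:ℕ), by omega⟩) ?_ ?_ ?_ ?_ ?_
  · intro a ha
    rw [Finset.mem_filter] at ha ⊢
    obtain ⟨haD, hP⟩ := ha
    have hsq : ∑ u ∈ Finset.range (n-1), aget (Ttup n k l (n-1) a) u
        = ∑ u ∈ Finset.range (n-1), aget a u :=
      Finset.sum_congr rfl fun u hu =>
        aget_Ttup_lt n k l (n-1) a u (Finset.mem_range.mp hu) le_rfl hn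
    have hsplit := Finset.sum_range_succ (fun i => aget (Ttup n k l (n-1) a) i) (n-1)
    rw [show (n-1)+1 = n by omega] at hsplit
    constructor
    · rw [ESet, Finset.mem_filter]
      refine ⟨?_, ?_, ?_⟩
      · rw [Fintype.mem_piFinset]
        intro t
        rw [Finset.mem_range]
        by_cases ht : (t:ℕ) < n-1
        · have he : Ttup n k l (n-1) a t = aget a (t:ℕ) := by
            simp only [Ttup]; rw [if_pos ht]
          have hle : aget a (t:ℕ) ≤ ∑ u ∈ Finset.range (n-1), aget a u :=
            Finset.single_le_sum (f := fun u => aget a u) (fun _ _ => Nat.zero_le _)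
              (Finset.mem_range.mpr ht)
          rw [he]
          omega
        · have ht2 : (t:ℕ) = n-1 := by omega
          rw [Ttup_last' n k l hn a t ht2]
          omega
      · rw [sum_fin_eq, hsplit, hsq, aget_eq_val _ _ (by omega : n-1 < n), Ttup_last n k l hn a]
        omega
      · intro t ht
        have he : Ttup n k l (n-1) a t = aget a (t:ℕ) := by
          simp only [Ttup]; rw [if_pos ht]
        rw [he]
        exact aget_Dset_lt haD hr _ ht
    · rw [hsq]; exact hP
  · intro v hv
    rw [Finset.mem_filter] at hv
    obtain ⟨hvE, hQ⟩ := hv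
    rw [ESet, Finset.mem_filter] at hvE
    have hrs : ∑ u ∈ Finset.range (n-1), aget (fun i : Fin (n-1) => v ⟨(i:ℕ), by omega⟩) u
        = ∑ u ∈ Finset.range (n-1), aget v u := by
      apply Finset.sum_congr rfl
      intro u hu
      simp only [Finset.mem_range] at hu
      rw [aget_eq_val _ u hu, aget_eq_val v u (by omega)]
    rw [Finset.mem_filter]
    constructor
    · rw [Dset, Fintype.mem_piFinset]
      intro i
      rw [if_pos i.isLt, Finset.mem_range]
      have := hvE.2.2 ⟨(i:ℕ), by omega⟩ i.isLt
      omega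
    · rw [hrs]; exact hQ
  · intro a ha
    funext i
    rw [← aget_eq_val (Ttup n k l (n-1) a) (i:ℕ) (by omega),
      aget_Ttup_lt n k l (n-1) a (i:ℕ) i.isLt le_rfl hn, aget_eq_val a (i:ℕ) i.isLt]
  · intro v hv
    rw [Finset.mem_filter] at hv
    obtain ⟨hvE, hQ⟩ := hv
    rw [ESet, Finset.mem_filter] at hvE
    have hrs : ∑ u ∈ Finset.range (n-1), aget (fun i : Fin (n-1) => v ⟨(i:ℕ), by omega⟩) u
        = ∑ u ∈ Finset.range (n-1), aget v u := by
      apply Finset.sum_congr rfl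
      intro u hu
      simp only [Finset.mem_range] at hu
      rw [aget_eq_val _ u hu, aget_eq_val v u (by omega)]
    have hsplit := Finset.sum_range_succ (fun i => aget v i) (n-1)
    rw [show (n-1)+1 = n by omega] at hsplit
    have hsumv : ∑ i ∈ Finset.range n, aget v i = k + l := by
      rw [← sum_fin_eq]; exact hvE.2.1
    funext t
    by_cases ht : (t:ℕ) < n-1
    · have h1 : Ttup n k l (n-1) (fun i : Fin (n-1) => v ⟨(i:ℕ), by omega⟩) t
          = aget (fun i : Fin (n-1) => v ⟨(i:ℕ), by omega⟩) (t:ℕ) := by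
        simp only [Ttup]; rw [if_pos ht]
      rw [h1, aget_eq_val _ _ ht]
    · have ht2 : (t:ℕ) = n-1 := by omega
      have hteq : t = (⟨n-1, by omega⟩ : Fin n) := Fin.ext ht2
      have hvt : v t = aget v (n-1) := by
        rw [aget_eq_val v (n-1) (by omega)]
        exact congrArg v hteq
      rw [Ttup_last' n k l hn _ t ht2, hrs, hvt]
      omega
  · intro a ha
    rw [Finset.mem_filter] at ha
    congr 1
    have hsq : ∑ u ∈ Finset.range (n-1), aget (Ttup n k l (n-1) a) u
        = ∑ u ∈ Finset.range (n-1), aget a u :=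
      Finset.sum_congr rfl fun u hu =>
        aget_Ttup_lt n k l (n-1) a u (Finset.mem_range.mp hu) le_rfl hn
    have hprodq : ∏ t ∈ Finset.range (n-1),
          Acoef r ((k : ℤ) - (∑ u ∈ Finset.range t, (aget (Ttup n k l (n-1) a) u : ℤ)))
            (r - aget (Ttup n k l (n-1) a) t)
        = ∏ t ∈ Finset.range (n-1),
          Acoef r ((k : ℤ) - (∑ u ∈ Finset.range t, (aget a u : ℤ))) (r - aget a t) := by
      apply Finset.prod_congr rfl
      intro t ht
      simp only [Finset.mem_range] at ht
      rw [aget_Ttup_lt n k l (n-1) a t ht le_rfl hn]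
      congr 2
      apply Finset.sum_congr rfl
      intro u hu
      simp only [Finset.mem_range] at hu
      rw [aget_Ttup_lt n k l (n-1) a u (by omega) le_rfl hn]
    rw [hsq, hprodq]
    rfl

/-- for `n ≥ 2` and `k, ℓ ∈ ℕ`,
`(k,0,…,0,ℓ) = Σ_{a ∈ 𝓔_n(k+ℓ)} (−1)^{a_1+⋯+a_{n−1}+(n−1)(r−1)}
  (∏_{i=1}^{n−1} A(k−x_i, r−a_i)) · a` holds in `V_n`, where `x_i = a_1+⋯+a_{i−1}`. -/
theorem stmt10 (r n : ℕ) (hr : 2 ≤ r) (hn : 2 ≤ n) (k l : ℕ) :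
    Finsupp.single (endTuple n k l) (1 : K)
      - ∑ a ∈ ESet r n (k + l),
          ((-1 : K) ^ ((∑ t ∈ Finset.range (n - 1), aget a t) + (n - 1) * (r - 1)) *
            ∏ t ∈ Finset.range (n - 1),
              Acoef r ((k : ℤ) - (∑ u ∈ Finset.range t, (aget a u : ℤ))) (r - aget a t)) •
          Finsupp.single a (1 : K)
      ∈ Submodule.span K (relSet r n) := by
  have hr1 : 1 ≤ r := by omega
  have hclaim := claimP r n k l hr1 hn (n-1) le_rfl
  rwa [final_sum r n k l hr1 hn] at hclaim
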